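/- Let Δ be a simplicial complex on [n], 1 ≤ i < j ≤ n, Γ = Shift_{ij}(Δ), and W ⊂ [n]∖{i,j}. Set Δ_1 = Δ_{W∪{i}}, Δ_2 = Δ_{W∪{j}}, Γ_1 = Γ_{W∪{i}}, Γ_2 = Γ_{W∪{j}}, so that Δ_1 ∩ Δ_2 = Γ_1 ∩ Γ_2 = Δ_W = Γ_W. Let ∂_{1,k} : H̃_k(Δ_W;K) → H̃_k(Δ_1;K) ⊕ H̃_k(Δ_2;K) and ∂'_{1,k} : H̃_k(Γ_W;K) → H̃_k(Γ_1;K) ⊕ H̃_k(Γ_2;K) be the maps appearing in the reduced Mayer–Vietoris exact sequences of the pairs (Δ_1, Δ_2) and (Γ_1, Γ_2). Then Ker(∂'_{1,k}) ⊂ Ker(∂_{1,k}) for all k. -/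

import Mathlib

/-- A simplicial complex on `[n]`, modeled as a set of finsets of `Fin n`. -/
def IsSimplicialComplex {n : ℕ} (Δ : Set (Finset (Fin n))) : Prop :=
  (∀ j : Fin n, {j} ∈ Δ) ∧ ∀ σ ∈ Δ, ∀ τ : Finset (Fin n), τ ⊆ σ → τ ∈ Δ

/-- A collection of faces is closed under passing to subsets. -/
def DownClosed {n : ℕ} (Δ : Set (Finset (Fin n))) : Prop :=
  ∀ σ ∈ Δ, ∀ τ : Finset (Fin n), τ ⊆ σ → τ ∈ Δ

open Classical in
/-- `C_{ij}(σ)`, the basic combinatorial shifting operation on a single face. -/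
noncomputable def shiftFace {n : ℕ} (Δ : Set (Finset (Fin n))) (i j : Fin n)
    (σ : Finset (Fin n)) : Finset (Fin n) :=
  if i ∈ σ ∧ j ∉ σ ∧ insert j (σ.erase i) ∉ Δ then insert j (σ.erase i) else σ

/-- `Shift_{ij}(Δ)`. -/
noncomputable def shiftOp {n : ℕ} (Δ : Set (Finset (Fin n))) (i j : Fin n) :
    Set (Finset (Fin n)) :=
  (shiftFace Δ i j) '' Δ

/-- The induced subcomplex `Δ_W = {σ ∈ Δ : σ ⊆ W}`. -/
def restrictC {n : ℕ} (Δ : Set (Finset (Fin n))) (W : Finset (Fin n)) :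
    Set (Finset (Fin n)) :=
  {σ | σ ∈ Δ ∧ σ ⊆ W}

/-- The space of simplicial `(c-1)`-chains of `Δ` with coefficients in `K`, spanned
by the faces of `Δ` of cardinality `c` (including the empty face when `c = 0`,
which yields the *reduced* chain complex). -/
abbrev SimplicialChain (K : Type) [Field K] {n : ℕ} (Δ : Set (Finset (Fin n)))
    (c : ℕ) : Type :=
  {σ : Finset (Fin n) // σ ∈ Δ ∧ σ.card = c} → K

open Classical in
/-- The simplicial boundary map (from chains spanned by cardinality-`(c+1)` faces to
chains spanned by cardinality-`c` faces). -/
noncomputable def simplicialBoundary (K : Type) [Field K] {n : ℕ}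
    (Δ : Set (Finset (Fin n))) (c : ℕ) :
    SimplicialChain K Δ (c + 1) →ₗ[K] SimplicialChain K Δ c where
  toFun f τ := ∑ k : Fin n,
    if h : k ∉ τ.1 ∧ insert k τ.1 ∈ Δ then
      ((-1 : K) ^ ((τ.1.filter (fun l => l < k)).card)) •
        f ⟨insert k τ.1, h.2, by rw [Finset.card_insert_of_notMem h.1, τ.2.2]⟩
    else 0
  map_add' f g := by
    funext τ
    simp only [Pi.add_apply]
    rw [← Finset.sum_add_distrib]
    refine Finset.sum_congr rfl fun k _ => ?_
    split
    · simp only [Pi.add_apply, smul_add]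
    · simp
  map_smul' a f := by
    funext τ
    simp only [Pi.smul_apply, RingHom.id_apply]
    rw [Finset.smul_sum]
    refine Finset.sum_congr rfl fun k _ => ?_
    split
    · simp only [Pi.smul_apply, smul_comm a]
    · simp

/-- The space of (reduced) simplicial cycles in the chain space spanned by the
cardinality-`c` faces. -/
noncomputable def simplicialCycles (K : Type) [Field K] {n : ℕ}
    (Δ : Set (Finset (Fin n))) (c : ℕ) : Submodule K (SimplicialChain K Δ c) :=
  match c with
  | 0 => ⊤
  | (d + 1) => LinearMap.ker (simplicialBoundary K Δ d)

/-- The reduced simplicial homology `H̃_{c-1}(Δ; K)`: cycles modulo boundaries in the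
chain space spanned by the cardinality-`c` faces of `Δ`. -/
abbrev reducedHomology (K : Type) [Field K] {n : ℕ} (Δ : Set (Finset (Fin n)))
    (c : ℕ) : Type :=
  simplicialCycles K Δ c ⧸
    Submodule.comap (simplicialCycles K Δ c).subtype
      (LinearMap.range (simplicialBoundary K Δ c))

open Classical in
/-- The chain map induced by an inclusion of complexes `Δ' ⊆ Δ''` (extension by
zero of the dual-basis description; on faces it is the evident inclusion). -/
noncomputable def extendChain (K : Type) [Field K] {n : ℕ}
    {Δ' Δ'' : Set (Finset (Fin n))} (h : Δ' ⊆ Δ'') (c : ℕ) :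
    SimplicialChain K Δ' c →ₗ[K] SimplicialChain K Δ'' c where
  toFun f τ := if hτ : τ.1 ∈ Δ' then f ⟨τ.1, hτ, τ.2.2⟩ else 0
  map_add' f g := by
    funext τ
    by_cases hτ : τ.1 ∈ Δ' <;> simp [hτ]
  map_smul' a f := by
    funext τ
    by_cases hτ : τ.1 ∈ Δ' <;> simp [hτ]

theorem boundary_extendChain (K : Type) [Field K] {n : ℕ}
    {Δ' Δ'' : Set (Finset (Fin n))} (h : Δ' ⊆ Δ'') (hdc : DownClosed Δ') (c : ℕ)
    (f : SimplicialChain K Δ' (c + 1)) :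
    simplicialBoundary K Δ'' c (extendChain K h (c + 1) f) =
      extendChain K h c (simplicialBoundary K Δ' c f) := by
  funext τ
  simp only [simplicialBoundary, extendChain, LinearMap.coe_mk, AddHom.coe_mk]
  by_cases hτ : τ.1 ∈ Δ'
  · rw [dif_pos hτ]
    refine Finset.sum_congr rfl fun k _ => ?_
    by_cases hins : insert k τ.1 ∈ Δ'
    · have hins'' : insert k τ.1 ∈ Δ'' := h hins
      by_cases hk : k ∈ τ.1
      · rw [dif_neg (by tauto), dif_neg (by tauto)]
      · rw [dif_pos ⟨hk, hins''⟩, dif_pos hins, dif_pos ⟨hk, hins⟩]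
    · by_cases hcond : k ∉ τ.1 ∧ insert k τ.1 ∈ Δ''
      · rw [dif_pos hcond, dif_neg hins, smul_zero,
          dif_neg (show ¬(k ∉ τ.1 ∧ insert k τ.1 ∈ Δ') by tauto)]
      · rw [dif_neg hcond,
          dif_neg (show ¬(k ∉ τ.1 ∧ insert k τ.1 ∈ Δ') by tauto)]
  · rw [dif_neg hτ]
    refine Finset.sum_eq_zero fun k _ => ?_
    by_cases hcond : k ∉ τ.1 ∧ insert k τ.1 ∈ Δ''
    · rw [dif_pos hcond]
      have hnot : insert k τ.1 ∉ Δ' := fun hmem =>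
        hτ (hdc _ hmem _ (Finset.subset_insert _ _))
      rw [dif_neg hnot, smul_zero]
    · rw [dif_neg hcond]

theorem extend_mem_cycles (K : Type) [Field K] {n : ℕ}
    {Δ' Δ'' : Set (Finset (Fin n))} (h : Δ' ⊆ Δ'') (hdc : DownClosed Δ') (c : ℕ) :
    ∀ x ∈ simplicialCycles K Δ' c, extendChain K h c x ∈ simplicialCycles K Δ'' c := by
  intro x hx
  cases c with
  | zero => trivial
  | succ d =>
    have hx' : simplicialBoundary K Δ' d x = 0 := hx
    show simplicialBoundary K Δ'' d (extendChain K h (d + 1) x) = 0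
    rw [boundary_extendChain K h hdc d x, hx', map_zero]

/-- The map `H̃_{c-1}(Δ'; K) → H̃_{c-1}(Δ''; K)` induced on reduced simplicial
homology by an inclusion of complexes `Δ' ⊆ Δ''`. -/
noncomputable def inducedHomologyMap (K : Type) [Field K] {n : ℕ}
    {Δ' Δ'' : Set (Finset (Fin n))} (h : Δ' ⊆ Δ'') (hdc : DownClosed Δ') (c : ℕ) :
    reducedHomology K Δ' c →ₗ[K] reducedHomology K Δ'' c :=
  Submodule.mapQ _ _
    (LinearMap.restrict (extendChain K h c) (extend_mem_cycles K h hdc c))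
    (by
      intro x hx
      simp only [Submodule.mem_comap, Submodule.coe_subtype, LinearMap.mem_range] at hx ⊢
      obtain ⟨u, hu⟩ := hx
      refine ⟨extendChain K h (c + 1) u, ?_⟩
      have : (LinearMap.restrict (extendChain K h c)
          (extend_mem_cycles K h hdc c) x : SimplicialChain K Δ'' c) =
          extendChain K h c (x : SimplicialChain K Δ' c) := rfl
      rw [this, ← hu, boundary_extendChain K h hdc c u])

/-- The first map `H̃_k(Δ_W) → H̃_k(Δ_1) ⊕ H̃_k(Δ_2)`, `x ↦ (i_*(x), −j_*(x))`,
appearing in the reduced Mayer–Vietoris exact sequence (here `Δ_W = Δ_1 ∩ Δ_2`). -/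
noncomputable def mayerVietorisMap (K : Type) [Field K] {n : ℕ}
    {ΔW Δ₁ Δ₂ : Set (Finset (Fin n))} (h₁ : ΔW ⊆ Δ₁) (h₂ : ΔW ⊆ Δ₂)
    (hdc : DownClosed ΔW) (c : ℕ) :
    reducedHomology K ΔW c →ₗ[K]
      (reducedHomology K Δ₁ c) × (reducedHomology K Δ₂ c) :=
  LinearMap.prod (inducedHomologyMap K h₁ hdc c) (-(inducedHomologyMap K h₂ hdc c))


section ShiftAux

open Classical

variable {n : ℕ}

/-- Replace `j` by `i` in a finset. -/
def jSwap (i j : Fin n) (σ : Finset (Fin n)) : Finset (Fin n) :=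
  if j ∈ σ then insert i (σ.erase j) else σ

/-- Sign of the relabeling `j ↦ i` on an ordered simplex. -/
def sgnIJ (K : Type) [Field K] (i j : Fin n) (σ : Finset (Fin n)) : K :=
  if j ∈ σ then (-1 : K) ^ ((σ.filter (fun l => i < l ∧ l < j)).card) else 1

theorem jSwap_of_not_mem {i j : Fin n} {σ : Finset (Fin n)} (h : j ∉ σ) :
    jSwap i j σ = σ := if_neg h

theorem jSwap_of_mem {i j : Fin n} {σ : Finset (Fin n)} (h : j ∈ σ) :
    jSwap i j σ = insert i (σ.erase j) := if_pos h

theorem sgnIJ_of_not_mem (K : Type) [Field K] {i j : Fin n} {σ : Finset (Fin n)}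
    (h : j ∉ σ) : sgnIJ K i j σ = 1 := if_neg h

theorem sgnIJ_of_mem (K : Type) [Field K] {i j : Fin n} {σ : Finset (Fin n)}
    (h : j ∈ σ) :
    sgnIJ K i j σ = (-1 : K) ^ ((σ.filter (fun l => i < l ∧ l < j)).card) := if_pos h

theorem i_mem_jSwap {i j : Fin n} {σ : Finset (Fin n)} (h : j ∈ σ) :
    i ∈ jSwap i j σ := by
  rw [jSwap_of_mem h]; exact Finset.mem_insert_self _ _

theorem mem_jSwap_of_ne {i j m : Fin n} {σ : Finset (Fin n)} (hmi : m ≠ i)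
    (hmj : m ≠ j) : m ∈ jSwap i j σ ↔ m ∈ σ := by
  unfold jSwap; split
  · next h =>
    simp only [Finset.mem_insert, Finset.mem_erase, hmi, hmj, false_or, ne_eq,
      not_false_iff, true_and]
  · exact Iff.rfl

theorem jSwap_card {i j : Fin n} {σ : Finset (Fin n)} (hij : i ≠ j) (hi : i ∉ σ) :
    (jSwap i j σ).card = σ.card := by
  unfold jSwap; split
  · next h =>
    rw [Finset.card_insert_of_notMem (fun hm => hi (Finset.mem_of_mem_erase hm)),
      Finset.card_erase_of_mem h]
    have : 0 < σ.card := Finset.card_pos.2 ⟨j, h⟩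
    omega
  · rfl

theorem jSwap_insert_of_ne {i j k : Fin n} {σ : Finset (Fin n)} (hkj : k ≠ j) :
    jSwap i j (insert k σ) = insert k (jSwap i j σ) := by
  unfold jSwap
  by_cases h : j ∈ σ
  · rw [if_pos (Finset.mem_insert_of_mem h), if_pos h, Finset.erase_insert_of_ne hkj,
      Finset.insert_comm]
  · have hj : j ∉ insert k σ := by
      intro hm
      rcases Finset.mem_insert.1 hm with e | e
      · exact hkj e.symm
      · exact h e
    rw [if_neg hj, if_neg h]

theorem jSwap_insert_j {i j : Fin n} {σ : Finset (Fin n)} (hj : j ∉ σ) :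
    jSwap i j (insert j σ) = insert i σ := by
  unfold jSwap
  rw [if_pos (Finset.mem_insert_self _ _), Finset.erase_insert hj]

theorem jSwap_subset_insert {i j k : Fin n} {σ : Finset (Fin n)} (hk : k ∉ σ) :
    jSwap i j σ ⊆ jSwap i j (insert k σ) := by
  by_cases hkj : k = j
  · subst hkj
    rw [jSwap_insert_j hk, jSwap_of_not_mem hk]
    exact Finset.subset_insert _ _
  · rw [jSwap_insert_of_ne hkj]
    exact Finset.subset_insert _ _

theorem not_mem_of_subset_insert {i j : Fin n} (hij : i ≠ j) {W : Finset (Fin n)}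
    (hiW : i ∉ W) {σ : Finset (Fin n)} (h : σ ⊆ insert j W) : i ∉ σ := by
  intro hi
  rcases Finset.mem_insert.1 (h hi) with e | e
  · exact hij e
  · exact hiW e

/-- Characterization of the faces of `Shift_{ij}(Δ)` lying in `W ∪ {i}`. -/
theorem mem_shift_restrict_i {Δ : Set (Finset (Fin n))} {i j : Fin n} (hij : i < j)
    {W : Finset (Fin n)} (hjW : j ∉ W) {σ : Finset (Fin n)} :
    σ ∈ restrictC (shiftOp Δ i j) (insert i W) ↔
      σ ∈ Δ ∧ σ ⊆ insert i W ∧ (i ∈ σ → insert j (σ.erase i) ∈ Δ) := by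
  have hji : j ∉ insert i W := by
    intro hm
    rcases Finset.mem_insert.1 hm with e | e
    · exact hij.ne' e
    · exact hjW e
  constructor
  · rintro ⟨⟨ρ, hρ, hmap⟩, hsub⟩
    have hjσ : j ∉ σ := fun hj => hji (hsub hj)
    unfold shiftFace at hmap
    split at hmap
    · exact absurd (hmap ▸ Finset.mem_insert_self j _) hjσ
    · next hcond =>
      subst hmap
      refine ⟨hρ, hsub, fun hi => ?_⟩
      by_contra hns
      exact hcond ⟨hi, hjσ, hns⟩
  · rintro ⟨hσ, hsub, hsw⟩
    refine ⟨⟨σ, hσ, ?_⟩, hsub⟩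
    unfold shiftFace
    rw [if_neg]
    rintro ⟨hi, _, hns⟩
    exact hns (hsw hi)

theorem downClosed_shift_restrict_i {Δ : Set (Finset (Fin n))}
    (hΔ : IsSimplicialComplex Δ) {i j : Fin n} (hij : i < j) {W : Finset (Fin n)}
    (hjW : j ∉ W) : DownClosed (restrictC (shiftOp Δ i j) (insert i W)) := by
  intro σ hσ τ hτ
  rw [mem_shift_restrict_i hij hjW] at hσ ⊢
  obtain ⟨h1, h2, h3⟩ := hσ
  refine ⟨hΔ.2 _ h1 _ hτ, hτ.trans h2, fun hiτ => hΔ.2 _ (h3 (hτ hiτ)) _ ?_⟩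
  exact Finset.insert_subset_insert _ (Finset.erase_subset_erase _ hτ)

theorem shift_restrict_i_subset {Δ : Set (Finset (Fin n))} {i j : Fin n}
    (hij : i < j) {W : Finset (Fin n)} (hjW : j ∉ W) :
    restrictC (shiftOp Δ i j) (insert i W) ⊆ restrictC Δ (insert i W) := by
  intro σ hσ
  obtain ⟨h1, h2, -⟩ := (mem_shift_restrict_i hij hjW).1 hσ
  exact ⟨h1, h2⟩

theorem extendChain_extendChain (K : Type) [Field K]
    {D1 D2 D3 : Set (Finset (Fin n))} (h12 : D1 ⊆ D2) (h23 : D2 ⊆ D3)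
    (m : ℕ) (f : SimplicialChain K D1 m) :
    extendChain K h23 m (extendChain K h12 m f) =
      extendChain K (h12.trans h23) m f := by
  funext τ
  simp only [extendChain, LinearMap.coe_mk, AddHom.coe_mk]
  by_cases h1 : τ.1 ∈ D1
  · rw [dif_pos (h12 h1), dif_pos h1]
  · by_cases h2 : τ.1 ∈ D2
    · rw [dif_pos h2, dif_neg h1]
    · rw [dif_neg h2, dif_neg h1]

theorem neg_one_pow_congr' (K : Type) [Field K] {a b : ℕ} (h : a % 2 = b % 2) :
    ((-1 : K) ^ a = (-1 : K) ^ b) := by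
  conv_lhs => rw [← Nat.div_add_mod a 2]
  conv_rhs => rw [← Nat.div_add_mod b 2]
  rw [pow_add, pow_add, pow_mul, pow_mul, neg_one_sq, one_pow, one_pow, h]

theorem card_filter_lt_split {τ : Finset (Fin n)} {i j : Fin n} (hij : i < j)
    (hi : i ∉ τ) :
    (τ.filter (fun l => l < j)).card =
      (τ.filter (fun l => l < i)).card +
        (τ.filter (fun l => i < l ∧ l < j)).card := by
  have hset : τ.filter (fun l => l < j) =
      τ.filter (fun l => l < i) ∪ τ.filter (fun l => i < l ∧ l < j) := by
    ext l
    simp only [Finset.mem_union, Finset.mem_filter]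
    constructor
    · rintro ⟨hl, hlj⟩
      rcases lt_trichotomy l i with h | h | h
      · exact Or.inl ⟨hl, h⟩
      · exact absurd (h ▸ hl) hi
      · exact Or.inr ⟨hl, h, hlj⟩
    · rintro (⟨hl, h⟩ | ⟨hl, h1, h2⟩)
      · exact ⟨hl, h.trans hij⟩
      · exact ⟨hl, h2⟩
  rw [hset, Finset.card_union_of_disjoint]
  rw [Finset.disjoint_left]
  intro l hl1 hl2
  simp only [Finset.mem_filter] at hl1 hl2
  exact absurd hl2.2.1 (not_lt.2 hl1.2.le)

theorem card_filter_between_insert {τ : Finset (Fin n)} {i j m : Fin n}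
    (hm : m ∉ τ) :
    ((insert m τ).filter (fun l => i < l ∧ l < j)).card =
      (τ.filter (fun l => i < l ∧ l < j)).card + (if i < m ∧ m < j then 1 else 0) := by
  rw [Finset.filter_insert]
  split_ifs with h
  · rw [Finset.card_insert_of_notMem (fun hc => hm (Finset.mem_of_mem_filter _ hc))]
  · omega

theorem card_filter_lt_jSwapped {τ : Finset (Fin n)} {i j m : Fin n} (hij : i < j)
    (hjτ : j ∈ τ) (hiτ : i ∉ τ) (hmi : m ≠ i) (hmj : m ≠ j) :
    ((insert i (τ.erase j)).filter (fun l => l < m)).card + (if j < m then 1 else 0)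
      = (τ.filter (fun l => l < m)).card + (if i < m then 1 else 0) := by
  have hie : i ∉ τ.erase j := fun h => hiτ (Finset.mem_of_mem_erase h)
  have herase : (τ.erase j).filter (fun l => l < m) =
      (τ.filter (fun l => l < m)).erase j := by
    rw [Finset.filter_erase]
  rw [Finset.filter_insert]
  split_ifs with him hjm hjm
  · have hjmem : j ∈ τ.filter (fun l => l < m) := Finset.mem_filter.2 ⟨hjτ, hjm⟩
    rw [Finset.card_insert_of_notMem (fun h => hie (Finset.mem_of_mem_filter _ h)),
      herase, Finset.card_erase_of_mem hjmem]
    have : 0 < (τ.filter (fun l => l < m)).card := Finset.card_pos.2 ⟨j, hjmem⟩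
    omega
  · have hjmem : j ∉ τ.filter (fun l => l < m) :=
      fun h => hjm (Finset.mem_filter.1 h).2
    rw [Finset.card_insert_of_notMem (fun h => hie (Finset.mem_of_mem_filter _ h)),
      herase, Finset.erase_eq_of_notMem hjmem]
  · exact absurd (hij.trans hjm) him
  · have hjmem : j ∉ τ.filter (fun l => l < m) :=
      fun h => hjm (Finset.mem_filter.1 h).2
    rw [herase, Finset.erase_eq_of_notMem hjmem]

/-- The signed chain map from chains on `Γ_{W∪{i}}` to chains on `Δ_{W∪{j}}`
induced by the vertex relabeling `j ↦ i`. -/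
noncomputable def betaMap (K : Type) [Field K] (Δ : Set (Finset (Fin n)))
    (i j : Fin n) (hij : i < j) (W : Finset (Fin n)) (hiW : i ∉ W) (m : ℕ) :
    SimplicialChain K (restrictC (shiftOp Δ i j) (insert i W)) m →ₗ[K]
      SimplicialChain K (restrictC Δ (insert j W)) m where
  toFun f σ :=
    if h : jSwap i j σ.1 ∈ restrictC (shiftOp Δ i j) (insert i W) then
      sgnIJ K i j σ.1 * f ⟨jSwap i j σ.1, h,
        (jSwap_card hij.ne (not_mem_of_subset_insert hij.ne hiW σ.2.1.2)).trans σ.2.2⟩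
    else 0
  map_add' f g := by
    funext σ
    by_cases h : jSwap i j σ.1 ∈ restrictC (shiftOp Δ i j) (insert i W) <;>
      simp [h, mul_add]
  map_smul' a f := by
    funext σ
    by_cases h : jSwap i j σ.1 ∈ restrictC (shiftOp Δ i j) (insert i W) <;>
      simp [h, mul_left_comm]

theorem betaMap_extendChain (K : Type) [Field K] {Δ : Set (Finset (Fin n))}
    {i j : Fin n} (hij : i < j) {W : Finset (Fin n)} (hiW : i ∉ W) (hjW : j ∉ W)
    (h1 : restrictC Δ W ⊆ restrictC (shiftOp Δ i j) (insert i W))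
    (h2 : restrictC Δ W ⊆ restrictC Δ (insert j W))
    (m : ℕ) (z : SimplicialChain K (restrictC Δ W) m) :
    betaMap K Δ i j hij W hiW m (extendChain K h1 m z) = extendChain K h2 m z := by
  funext σ
  simp only [betaMap, extendChain, LinearMap.coe_mk, AddHom.coe_mk]
  by_cases hjσ : j ∈ σ.1
  · have hσW : σ.1 ∉ restrictC Δ W := fun hm => hjW (hm.2 hjσ)
    rw [dif_neg hσW]
    by_cases hS : jSwap i j σ.1 ∈ restrictC (shiftOp Δ i j) (insert i W)
    · rw [dif_pos hS, dif_neg, mul_zero]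
      intro hm
      exact hiW (hm.2 (i_mem_jSwap hjσ))
    · rw [dif_neg hS]
  · have hg : jSwap i j σ.1 = σ.1 := jSwap_of_not_mem hjσ
    by_cases hW : σ.1 ∈ restrictC Δ W
    · have hS : jSwap i j σ.1 ∈ restrictC (shiftOp Δ i j) (insert i W) := by
        rw [hg]; exact h1 hW
      rw [dif_pos hS, dif_pos hW, sgnIJ_of_not_mem K hjσ, one_mul]
      have hW2 : jSwap i j σ.1 ∈ restrictC Δ W := by rw [hg]; exact hW
      rw [dif_pos hW2]
      exact congrArg z (Subtype.ext hg)
    · rw [dif_neg hW]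
      by_cases hS : jSwap i j σ.1 ∈ restrictC (shiftOp Δ i j) (insert i W)
      · rw [dif_pos hS, dif_neg, mul_zero]
        rw [hg]; exact hW
      · rw [dif_neg hS]

theorem chain_apply_congr {K : Type} [Field K] {D : Set (Finset (Fin n))} {m : ℕ}
    (u : SimplicialChain K D m) {a b : Finset (Fin n)} (h : a = b)
    (ha : a ∈ D ∧ a.card = m) : u ⟨a, ha⟩ = u ⟨b, h ▸ ha⟩ := by
  subst h; rfl

set_option maxHeartbeats 1000000 in
theorem boundary_betaMap (K : Type) [Field K] {Δ : Set (Finset (Fin n))}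
    (hΔ : IsSimplicialComplex Δ) {i j : Fin n} (hij : i < j) {W : Finset (Fin n)}
    (hiW : i ∉ W) (hjW : j ∉ W) (c : ℕ)
    (u : SimplicialChain K (restrictC (shiftOp Δ i j) (insert i W)) (c + 1)) :
    simplicialBoundary K (restrictC Δ (insert j W)) c
        (betaMap K Δ i j hij W hiW (c + 1) u)
      = betaMap K Δ i j hij W hiW c
          (simplicialBoundary K (restrictC (shiftOp Δ i j) (insert i W)) c u) := by
  have hdcS := downClosed_shift_restrict_i hΔ (i := i) hij (W := W) hjW (Δ := Δ)
  funext τ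
  have hiτ : i ∉ τ.1 := not_mem_of_subset_insert hij.ne hiW τ.2.1.2
  simp only [simplicialBoundary, betaMap, LinearMap.coe_mk, AddHom.coe_mk]
  by_cases hgτ : jSwap i j τ.1 ∈ restrictC (shiftOp Δ i j) (insert i W)
  case neg =>
    rw [dif_neg hgτ]
    refine Finset.sum_eq_zero fun k _ => ?_
    by_cases hk : k ∉ τ.1 ∧ insert k τ.1 ∈ restrictC Δ (insert j W)
    · rw [dif_pos hk, dif_neg, smul_zero]
      intro hmem
      exact hgτ (hdcS _ hmem _ (jSwap_subset_insert hk.1))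
    · rw [dif_neg hk]
  case pos =>
    rw [dif_pos hgτ, Finset.mul_sum]
    refine Fintype.sum_equiv (Equiv.swap i j) _ _ fun m => ?_
    by_cases hmj : m = j
    · rw [hmj, Equiv.swap_apply_right]
      by_cases hjτ : j ∈ τ.1
      · rw [dif_neg (fun h => h.1 hjτ), dif_neg (fun h => h.1 (i_mem_jSwap hjτ)),
          mul_zero]
      · have hg : jSwap i j τ.1 = τ.1 := jSwap_of_not_mem hjτ
        by_cases hS : insert i τ.1 ∈ restrictC (shiftOp Δ i j) (insert i W)
        · obtain ⟨hmem, hsub, hsw⟩ := (mem_shift_restrict_i hij hjW).1 hS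
          have hTj : insert j τ.1 ∈ restrictC Δ (insert j W) := by
            constructor
            · have h4 := hsw (Finset.mem_insert_self i _)
              rwa [Finset.erase_insert hiτ] at h4
            · exact Finset.insert_subset_iff.2 ⟨Finset.mem_insert_self j _, τ.2.1.2⟩
          rw [dif_pos ⟨hjτ, hTj⟩]
          have hS2 : jSwap i j (insert j τ.1) ∈ restrictC (shiftOp Δ i j) (insert i W) := by
            rw [jSwap_insert_j hjτ]; exact hS
          rw [dif_pos hS2]
          have hS3 : i ∉ jSwap i j τ.1 ∧
              insert i (jSwap i j τ.1) ∈ restrictC (shiftOp Δ i j) (insert i W) := by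
            rw [hg]; exact ⟨hiτ, hS⟩
          rw [dif_pos hS3]
          rw [chain_apply_congr u
            (show jSwap i j (insert j τ.1) = insert i (jSwap i j τ.1) by
              rw [jSwap_insert_j hjτ, hg])]
          rw [sgnIJ_of_mem K (Finset.mem_insert_self j τ.1), sgnIJ_of_not_mem K hjτ,
            one_mul, smul_eq_mul, smul_eq_mul, ← mul_assoc, ← pow_add]
          congr 1
          rw [hg, card_filter_between_insert hjτ,
            if_neg (fun hc : i < j ∧ j < j => lt_irrefl j hc.2), add_zero]
          apply neg_one_pow_congr' K
          have hrel := card_filter_lt_split (τ := τ.1) hij hiτ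
          omega
        · have hR : ¬ (i ∉ jSwap i j τ.1 ∧
              insert i (jSwap i j τ.1) ∈ restrictC (shiftOp Δ i j) (insert i W)) := by
            rintro ⟨-, h2⟩
            rw [hg] at h2
            exact hS h2
          rw [dif_neg hR, mul_zero]
          by_cases hout : j ∉ τ.1 ∧ insert j τ.1 ∈ restrictC Δ (insert j W)
          · rw [dif_pos hout, dif_neg, smul_zero]
            intro h2
            rw [jSwap_insert_j hjτ] at h2
            exact hS h2
          · rw [dif_neg hout]
    by_cases hmi : m = i
    · rw [hmi, Equiv.swap_apply_left]
      have hL : ¬ (i ∉ τ.1 ∧ insert i τ.1 ∈ restrictC Δ (insert j W)) := by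
        rintro ⟨-, hT⟩
        rcases Finset.mem_insert.1 (hT.2 (Finset.mem_insert_self i _)) with e | e
        · exact hij.ne e
        · exact hiW e
      have hR : ¬ (j ∉ jSwap i j τ.1 ∧
          insert j (jSwap i j τ.1) ∈ restrictC (shiftOp Δ i j) (insert i W)) := by
        rintro ⟨-, hS⟩
        rcases Finset.mem_insert.1 (hS.2 (Finset.mem_insert_self j _)) with e | e
        · exact hij.ne' e
        · exact hjW e
      rw [dif_neg hL, dif_neg hR, mul_zero]
    · -- generic m, k = m
      rw [Equiv.swap_apply_of_ne_of_ne hmi hmj]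
      by_cases hmτ : m ∈ τ.1
      · rw [dif_neg (fun h => h.1 hmτ),
          dif_neg (fun h => h.1 ((mem_jSwap_of_ne hmi hmj).2 hmτ)), mul_zero]
      · have hswapins : jSwap i j (insert m τ.1) = insert m (jSwap i j τ.1) :=
          jSwap_insert_of_ne hmj
        by_cases hS : insert m (jSwap i j τ.1) ∈ restrictC (shiftOp Δ i j) (insert i W)
        · obtain ⟨hmem, hsub, hsw⟩ := (mem_shift_restrict_i hij hjW).1 hS
          have hmW : m ∈ W := by
            rcases Finset.mem_insert.1 (hsub (Finset.mem_insert_self m _)) with e | e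
            · exact absurd e hmi
            · exact e
          have hT : insert m τ.1 ∈ restrictC Δ (insert j W) := by
            refine ⟨?_, Finset.insert_subset_iff.2
              ⟨Finset.mem_insert_of_mem hmW, τ.2.1.2⟩⟩
            by_cases hjτ : j ∈ τ.1
            · have h4 := hsw (Finset.mem_insert_of_mem (i_mem_jSwap hjτ))
              have he : (insert m (jSwap i j τ.1)).erase i = insert m (τ.1.erase j) := by
                rw [jSwap_of_mem hjτ, Finset.erase_insert_of_ne hmi,
                  Finset.erase_insert (fun h => hiτ (Finset.mem_of_mem_erase h))]
              rw [he, Finset.insert_comm, Finset.insert_erase hjτ] at h4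
              exact h4
            · have he : insert m (jSwap i j τ.1) = insert m τ.1 := by
                rw [jSwap_of_not_mem hjτ]
              rwa [he] at hmem
          rw [dif_pos ⟨hmτ, hT⟩]
          have hS2 : jSwap i j (insert m τ.1) ∈ restrictC (shiftOp Δ i j) (insert i W) := by
            rw [hswapins]; exact hS
          rw [dif_pos hS2]
          have hS3 : m ∉ jSwap i j τ.1 ∧
              insert m (jSwap i j τ.1) ∈ restrictC (shiftOp Δ i j) (insert i W) :=
            ⟨fun h => hmτ ((mem_jSwap_of_ne hmi hmj).1 h), hS⟩
          rw [dif_pos hS3]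
          rw [chain_apply_congr u hswapins]
          rw [smul_eq_mul, smul_eq_mul, ← mul_assoc, ← mul_assoc]
          congr 1
          by_cases hjτ : j ∈ τ.1
          · rw [sgnIJ_of_mem K (Finset.mem_insert_of_mem hjτ : j ∈ insert m τ.1),
              sgnIJ_of_mem K hjτ, jSwap_of_mem hjτ, card_filter_between_insert hmτ,
              ← pow_add, ← pow_add]
            apply neg_one_pow_congr' K
            have hrel := card_filter_lt_jSwapped (τ := τ.1) hij hjτ hiτ hmi hmj
            rcases lt_or_gt_of_ne (fun e => hmi e) with hmi' | hmi' <;>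
              rcases lt_or_gt_of_ne (fun e => hmj e) with hmj' | hmj'
            · rw [if_neg (fun hc : i < m ∧ m < j => lt_asymm hmi' hc.1)]
              rw [if_neg (not_lt.2 hmj'.le), if_neg (not_lt.2 hmi'.le)] at hrel
              omega
            · exact absurd ((hij.trans hmj').trans hmi') (lt_irrefl i)
            · rw [if_pos ⟨hmi', hmj'⟩]
              rw [if_neg (not_lt.2 hmj'.le), if_pos hmi'] at hrel
              omega
            · rw [if_neg (fun hc : i < m ∧ m < j => lt_asymm hmj' hc.2)]
              rw [if_pos hmj', if_pos (hij.trans hmj')] at hrel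
              omega
          · have hg : jSwap i j τ.1 = τ.1 := jSwap_of_not_mem hjτ
            have hjm : j ∉ insert m τ.1 := by
              intro h
              rcases Finset.mem_insert.1 h with e | e
              · exact hmj e.symm
              · exact hjτ e
            rw [sgnIJ_of_not_mem K hjm, sgnIJ_of_not_mem K hjτ, hg, mul_one, one_mul]
        · have hR : ¬ (m ∉ jSwap i j τ.1 ∧
              insert m (jSwap i j τ.1) ∈ restrictC (shiftOp Δ i j) (insert i W)) :=
            fun h => hS h.2
          rw [dif_neg hR, mul_zero]
          by_cases hout : m ∉ τ.1 ∧ insert m τ.1 ∈ restrictC Δ (insert j W)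
          · rw [dif_pos hout, dif_neg, smul_zero]
            intro h2
            rw [hswapins] at h2
            exact hS h2
          · rw [dif_neg hout]

end ShiftAux

set_option synthInstance.maxHeartbeats 1000000 in
/-- **Lemma 3.2.** Let `Δ` be a simplicial complex on `[n]`, `1 ≤ i < j ≤ n`,
`Γ = Shift_{ij}(Δ)` and `W ⊆ [n]∖{i,j}`; set `Δ₁ = Δ_{W∪{i}}`, `Δ₂ = Δ_{W∪{j}}`,
`Γ₁ = Γ_{W∪{i}}`, `Γ₂ = Γ_{W∪{j}}` (so that `Δ₁ ∩ Δ₂ = Γ₁ ∩ Γ₂ = Δ_W = Γ_W`).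
Let `∂_{1,k} : H̃_k(Δ_W;K) → H̃_k(Δ₁;K) ⊕ H̃_k(Δ₂;K)` and
`∂'_{1,k} : H̃_k(Γ_W;K) → H̃_k(Γ₁;K) ⊕ H̃_k(Γ₂;K)` be the maps appearing in the
reduced Mayer–Vietoris exact sequences of the pairs `(Δ₁, Δ₂)` and `(Γ₁, Γ₂)`.
Then `Ker(∂'_{1,k}) ⊆ Ker(∂_{1,k})` for all `k`. -/
theorem ker_mayerVietorisMap_shiftOp_le (K : Type) [Field K] (n : ℕ)
    (Δ : Set (Finset (Fin n))) (hΔ : IsSimplicialComplex Δ)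
    (i j : Fin n) (hij : i < j) (W : Finset (Fin n)) (hiW : i ∉ W) (hjW : j ∉ W)
    (hdcW : DownClosed (restrictC Δ W))
    (h₁ : restrictC Δ W ⊆ restrictC Δ (insert i W))
    (h₂ : restrictC Δ W ⊆ restrictC Δ (insert j W))
    (h₁' : restrictC Δ W ⊆ restrictC (shiftOp Δ i j) (insert i W))
    (h₂' : restrictC Δ W ⊆ restrictC (shiftOp Δ i j) (insert j W))
    (c : ℕ) :
    LinearMap.ker (mayerVietorisMap K h₁' h₂' hdcW c) ≤
      LinearMap.ker (mayerVietorisMap K h₁ h₂ hdcW c) := by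
  intro x hx
  rw [LinearMap.mem_ker] at hx ⊢
  obtain ⟨z, rfl⟩ := Submodule.Quotient.mk_surjective _ x
  have hx1 : inducedHomologyMap K h₁' hdcW c (Submodule.Quotient.mk z) = 0 := by
    have h := congrArg Prod.fst hx
    simpa [mayerVietorisMap, LinearMap.prod_apply] using h
  simp only [inducedHomologyMap, Submodule.mapQ_apply, Submodule.Quotient.mk_eq_zero,
    Submodule.mem_comap, Submodule.coe_subtype, LinearMap.mem_range] at hx1
  obtain ⟨u, hu⟩ := hx1
  have hu' : simplicialBoundary K (restrictC (shiftOp Δ i j) (insert i W)) c u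
      = extendChain K h₁' c (z : SimplicialChain K (restrictC Δ W) c) := hu
  have hSD : restrictC (shiftOp Δ i j) (insert i W) ⊆ restrictC Δ (insert i W) :=
    shift_restrict_i_subset hij hjW
  have hdcS : DownClosed (restrictC (shiftOp Δ i j) (insert i W)) :=
    downClosed_shift_restrict_i hΔ hij hjW
  simp only [mayerVietorisMap, LinearMap.prod_apply, Function.prod, LinearMap.neg_apply,
    Prod.mk_eq_zero, neg_eq_zero, inducedHomologyMap, Submodule.mapQ_apply, Submodule.Quotient.mk_eq_zero,
    Submodule.mem_comap, Submodule.coe_subtype, LinearMap.mem_range]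
  constructor
  · refine ⟨extendChain K hSD (c + 1) u, ?_⟩
    have hgoal : simplicialBoundary K (restrictC Δ (insert i W)) c
        (extendChain K hSD (c + 1) u)
        = extendChain K h₁ c (z : SimplicialChain K (restrictC Δ W) c) := by
      rw [boundary_extendChain K hSD hdcS c u, hu', extendChain_extendChain]
    exact hgoal
  · refine ⟨betaMap K Δ i j hij W hiW (c + 1) u, ?_⟩
    have hgoal : simplicialBoundary K (restrictC Δ (insert j W)) c
        (betaMap K Δ i j hij W hiW (c + 1) u)
        = extendChain K h₂ c (z : SimplicialChain K (restrictC Δ W) c) := by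
      rw [boundary_betaMap K hΔ hij hiW hjW c u, hu',
        betaMap_extendChain K hij hiW hjW h₁' h₂ c]
    exact hgoal
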